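/- Let ℋ be a complex Hilbert space and A ∈ B(ℋ) a self-adjoint operator with nonnegative spectrum. Let θ ∈ ℂ and w ∈ ℂ with w ≠ 0 and Re(e^{θ} w) ≥ 0. Then the operator w·1 + e^{−θ} A is invertible in B(ℋ), and ‖(w·1 + e^{−θ} A)⁻¹‖ ≤ e^{2|Re θ|} |w|⁻¹ and ‖A (w·1 + e^{−θ} A)⁻¹‖ ≤ e^{|Re θ|}. -/

import Mathlib

/-- **Dilated free resolvent bound.** Let `A` be a bounded self-adjoint
operator on a complex Hilbert space with nonnegative spectrum, and let
`θ, w ∈ ℂ` with `w ≠ 0` and `Re(e^θ w) ≥ 0`. Then `w·1 + e^{−θ} A` is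
invertible in `B(ℋ)`, with `‖(w·1 + e^{−θ}A)⁻¹‖ ≤ e^{2|Re θ|} |w|⁻¹` and
`‖A (w·1 + e^{−θ}A)⁻¹‖ ≤ e^{|Re θ|}`. -/
theorem dilated_free_resolvent_bound
    {ℋ : Type*} [NormedAddCommGroup ℋ] [InnerProductSpace ℂ ℋ] [CompleteSpace ℋ]
    (A : ℋ →L[ℂ] ℋ) (hA : IsSelfAdjoint A)
    (hspec : ∀ z ∈ spectrum ℂ A, ∃ t : ℝ, 0 ≤ t ∧ z = (t : ℂ))
    (θ w : ℂ) (hw : w ≠ 0) (hRe : 0 ≤ (Complex.exp θ * w).re) :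
    IsUnit (w • (1 : ℋ →L[ℂ] ℋ) + Complex.exp (-θ) • A) ∧
    ‖Ring.inverse (w • (1 : ℋ →L[ℂ] ℋ) + Complex.exp (-θ) • A)‖ ≤
      Real.exp (2 * |θ.re|) * ‖w‖⁻¹ ∧
    ‖A * Ring.inverse (w • (1 : ℋ →L[ℂ] ℋ) + Complex.exp (-θ) • A)‖ ≤
      Real.exp |θ.re| := by
  have hAn : IsStarNormal A := hA.isStarNormal
  set v : ℂ := Complex.exp θ * w with hv
  have hvne : v ≠ 0 := mul_ne_zero (Complex.exp_ne_zero θ) hw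
  have hvabs : 0 < ‖v‖ := norm_pos_iff.mpr hvne
  -- key pointwise inequalities on the spectrum
  have key : ∀ z ∈ spectrum ℂ A,
      ‖v‖ ≤ ‖v + z‖ ∧ ‖z‖ ≤ ‖v + z‖ := by
    intro z hz
    obtain ⟨t, ht, rfl⟩ := hspec z hz
    have h1 : (‖v + (t : ℂ)‖)^2 = (v.re + t)^2 + v.im^2 := by
      rw [Complex.sq_norm]
      simp [Complex.normSq_apply, Complex.add_re, Complex.add_im]
      ring
    have h2 : (‖v‖)^2 = v.re^2 + v.im^2 := by
      rw [Complex.sq_norm]; simp [Complex.normSq_apply]; ring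
    have h3 : (‖((t : ℝ) : ℂ)‖)^2 = t^2 := by
      rw [Complex.sq_norm]; simp [Complex.normSq_apply]; ring
    constructor
    · have hsq : (‖v‖)^2 ≤ (‖v + (t : ℂ)‖)^2 := by
        rw [h1, h2]; nlinarith
      exact (pow_le_pow_iff_left₀ (norm_nonneg _) (norm_nonneg _)
        two_ne_zero).mp hsq
    · have hsq : (‖((t : ℝ) : ℂ)‖)^2 ≤ (‖v + (t : ℂ)‖)^2 := by
        rw [h1, h3]; nlinarith
      exact (pow_le_pow_iff_left₀ (norm_nonneg _) (norm_nonneg _)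
        two_ne_zero).mp hsq
  have hne : ∀ z ∈ spectrum ℂ A, v + z ≠ 0 := by
    intro z hz h0
    have := (key z hz).1
    rw [h0] at this
    simp only [norm_zero] at this
    exact absurd this (not_le.mpr hvabs)
  -- functions
  have hfc : ContinuousOn (fun z : ℂ => (v + z)⁻¹) (spectrum ℂ A) := by
    apply ContinuousOn.inv₀
    · fun_prop
    · exact hne
  have hgc : ContinuousOn (fun z : ℂ => v + z) (spectrum ℂ A) := by fun_prop
  set D : ℋ →L[ℂ] ℋ := cfc (fun z : ℂ => (v + z)⁻¹) A with hD
  set C : ℋ →L[ℂ] ℋ := v • (1 : ℋ →L[ℂ] ℋ) + A with hC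
  have hCc : C = cfc (fun z : ℂ => v + z) A := by
    have e : (fun z : ℂ => v + z) = fun z : ℂ => v + id z := rfl
    rw [hC, e, cfc_const_add v id A (by fun_prop) hAn, cfc_id ℂ A,
      Algebra.algebraMap_eq_smul_one]
  have hCD : C * D = 1 := by
    rw [hCc, hD, ← cfc_mul _ _ A hgc hfc]
    have : cfc (fun x : ℂ => (v + x) * (v + x)⁻¹) A = cfc (fun _ : ℂ => (1 : ℂ)) A :=
      cfc_congr fun z hz => mul_inv_cancel₀ (hne z hz)
    rw [this, cfc_const_one ℂ A]
  have hDC : D * C = 1 := by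
    rw [hCc, hD, ← cfc_mul _ _ A hfc hgc]
    have : cfc (fun x : ℂ => (v + x)⁻¹ * (v + x)) A = cfc (fun _ : ℂ => (1 : ℂ)) A :=
      cfc_congr fun z hz => inv_mul_cancel₀ (hne z hz)
    rw [this, cfc_const_one ℂ A]
  -- B = exp(-θ) • C
  set B : ℋ →L[ℂ] ℋ := w • (1 : ℋ →L[ℂ] ℋ) + Complex.exp (-θ) • A with hB
  have hBC : B = Complex.exp (-θ) • C := by
    rw [hB, hC, smul_add, smul_smul, hv]
    congr 2
    rw [← mul_assoc, ← Complex.exp_add]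
    simp
  have hexp : Complex.exp (-θ) * Complex.exp θ = 1 := by
    rw [← Complex.exp_add]; simp
  -- the unit
  have hBD : B * (Complex.exp θ • D) = 1 := by
    rw [hBC, smul_mul_smul_comm, hexp, hCD, one_smul]
  have hDB : (Complex.exp θ • D) * B = 1 := by
    rw [hBC, smul_mul_smul_comm, mul_comm (Complex.exp θ), hexp, hDC, one_smul]
  set u : (ℋ →L[ℂ] ℋ)ˣ := ⟨B, Complex.exp θ • D, hBD, hDB⟩ with hu
  have hunit : IsUnit B := ⟨u, rfl⟩
  have hinv : Ring.inverse B = Complex.exp θ • D := Ring.inverse_unit u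
  refine ⟨hunit, ?_, ?_⟩
  · -- first norm bound
    have hDnorm : ‖D‖ ≤ (‖v‖)⁻¹ := by
      apply norm_cfc_le (by positivity)
      intro z hz
      rw [norm_inv]
      exact inv_anti₀ hvabs (key z hz).1
    calc ‖Ring.inverse B‖ = Real.exp θ.re * ‖D‖ := by
          rw [hinv, norm_smul, Complex.norm_exp]
      _ ≤ Real.exp θ.re * (‖v‖)⁻¹ := by
          exact mul_le_mul_of_nonneg_left hDnorm (Real.exp_nonneg _)
      _ = (‖w‖)⁻¹ := by
          rw [hv, norm_mul, Complex.norm_exp, mul_inv]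
          rw [← mul_assoc, mul_inv_cancel₀ (Real.exp_ne_zero _), one_mul]
      _ ≤ Real.exp (2 * |θ.re|) * (‖w‖)⁻¹ := by
          nlinarith [Real.one_le_exp (by positivity : (0:ℝ) ≤ 2 * |θ.re|),
            inv_nonneg.mpr (norm_nonneg w)]
  · -- second norm bound
    have hAD : A * D = cfc (fun z : ℂ => z * (v + z)⁻¹) A := by
      conv_lhs => rw [← cfc_id ℂ A hAn, hD]
      rw [← cfc_mul _ _ A (by fun_prop) hfc]
      rfl
    have hADnorm : ‖A * D‖ ≤ 1 := by
      rw [hAD]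
      apply norm_cfc_le zero_le_one
      intro z hz
      rw [norm_mul, norm_inv]
      rcases eq_or_ne (v + z) 0 with h0 | h0
      · exact absurd h0 (hne z hz)
      · rw [← div_eq_mul_inv, div_le_one (by
          simpa using (norm_pos_iff.mpr h0))]
        exact (key z hz).2
    calc ‖A * Ring.inverse B‖ = Real.exp θ.re * ‖A * D‖ := by
          rw [hinv, mul_smul_comm, norm_smul, Complex.norm_exp]
      _ ≤ Real.exp θ.re * 1 := mul_le_mul_of_nonneg_left hADnorm (Real.exp_nonneg _)
      _ ≤ Real.exp |θ.re| := by
          rw [mul_one]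
          exact Real.exp_le_exp.mpr (le_abs_self _)
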